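/- Let x, v, w ∈ M₂(ℝ) satisfy ⟨x,x⟩ = −1, ⟨v,v⟩ = 0, ⟨x,v⟩ = ⟨x,w⟩ = ⟨v,w⟩ = 0, with v ≠ 0 and v, w linearly independent. Then ⟨w,w⟩ > 0. (In particular, for a null curve γ in AdS without inflection points, the acceleration γ'' is a space-like vector.) -/
import Mathlib


noncomputable section

open Matrix

/-- The space of 2×2 real matrices, i.e. `ℝ^{2,2}`. -/
abbrev M2 : Type := Matrix (Fin 2) (Fin 2) ℝ

/-- The symmetric bilinear form of signature (−,−,+,+) on `M₂(ℝ)`, with `⟨X,X⟩ = -det X`. -/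
def ip (X Y : M2) : ℝ :=
  (1 / 2) * (X 0 1 * Y 1 0 + X 1 0 * Y 0 1 - X 0 0 * Y 1 1 - X 1 1 * Y 0 0)

lemma ip_mul (M A B : M2) : ip (M * A) (M * B) = M.det * ip A B := by
  simp only [ip, Matrix.mul_apply, Fin.sum_univ_two, Matrix.det_fin_two]
  ring

lemma ip_self (A : M2) : ip A A = - A.det := by
  simp only [ip, Matrix.det_fin_two]; ring

lemma key (a b c p r s : ℝ) (e1 : a*a + b*c = 0) (e2 : 2*a*p + b*s + c*r = 0)
    (hne : ¬(a = 0 ∧ b = 0 ∧ c = 0)) :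
    0 < p*p + r*s ∨ ∃ l : ℝ, p = l*a ∧ r = l*b ∧ s = l*c := by
  by_cases ha : a = 0
  · subst ha
    have hbc : b*c = 0 := by linarith
    by_cases hb : b = 0
    · have hc : c ≠ 0 := fun hc => hne ⟨rfl, hb, hc⟩
      have hr : r = 0 := by
        have h : c * r = 0 := by rw [hb] at e2; linarith
        exact (mul_eq_zero.mp h).resolve_left hc
      by_cases hp : p = 0
      · right; exact ⟨s/c, by simp [hp], by simp [hr, hb], by field_simp⟩
      · left
        have := mul_self_pos.mpr hp
        have : r*s = 0 := by rw [hr]; ring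
        nlinarith [mul_self_pos.mpr hp]
    · have hc : c = 0 := (mul_eq_zero.mp hbc).resolve_left hb
      have hs : s = 0 := by
        have h : b * s = 0 := by rw [hc] at e2; linarith
        exact (mul_eq_zero.mp h).resolve_left hb
      by_cases hp : p = 0
      · right; exact ⟨r/b, by simp [hp], by field_simp, by simp [hs, hc]⟩
      · left
        have : r*s = 0 := by rw [hs]; ring
        nlinarith [mul_self_pos.mpr hp]
  · have hb : b ≠ 0 := by
      intro hb
      apply ha
      have h : a*a = 0 := by rw [hb] at e1; linarith
      exact mul_self_eq_zero.mp h
    by_cases hd : b*s - c*r = 0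
    · right
      refine ⟨r/b, ?_, by field_simp, ?_⟩
      · field_simp
        apply mul_left_cancel₀ ha
        linear_combination (b/2)*e2 - r*e1 - (b/2)*hd
      · field_simp
        linear_combination hd
    · left
      have hq : 4*(a*a)*(p*p + r*s) = (b*s - c*r)*(b*s - c*r) := by
        linear_combination (2*a*p - b*s - c*r)*e2 + 4*r*s*e1
      have h1 : 0 < (b*s - c*r)*(b*s - c*r) := mul_self_pos.mpr hd
      have h2 : 0 < a*a := mul_self_pos.mpr ha
      nlinarith

/-- If `x, v, w ∈ M₂(ℝ)` satisfy `⟨x,x⟩ = -1`, `⟨v,v⟩ = 0`,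
`⟨x,v⟩ = ⟨x,w⟩ = ⟨v,w⟩ = 0`, with `v ≠ 0` and `v, w` linearly independent, then
`⟨w,w⟩ > 0`. (In particular the acceleration of a null curve in AdS without inflection
points is space-like.) -/
theorem stmt2 (x v w : M2) (hx : ip x x = -1) (hv : ip v v = 0)
    (hxv : ip x v = 0) (hxw : ip x w = 0) (hvw : ip v w = 0)
    (hv0 : v ≠ 0) (hind : LinearIndependent ℝ ![v, w]) :
    0 < ip w w := by
  have hdet : x.det = 1 := by have := ip_self x; linarith
  obtain ⟨M, hMdet, hxM, hMx⟩ : ∃ M : M2, M.det = 1 ∧ x * M = 1 ∧ M * x = 1 := by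
    refine ⟨x.adjugate, ?_, ?_, ?_⟩
    · rw [Matrix.det_adjugate, hdet]; simp
    · rw [Matrix.mul_adjugate, hdet, one_smul]
    · rw [Matrix.adjugate_mul, hdet, one_smul]
  set v' := M * v with hv'def
  set w' := M * w with hw'def
  have hvx : v = x * v' := by rw [hv'def, ← mul_assoc, hxM, one_mul]
  have hwx : w = x * w' := by rw [hw'def, ← mul_assoc, hxM, one_mul]
  have h1 : ip v' v' = 0 := by rw [hv'def, ip_mul, hMdet, hv]; ring
  have h2 : ip v' w' = 0 := by rw [hv'def, hw'def, ip_mul, hMdet, hvw]; ring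
  have h3 : ip w' w' = ip w w := by rw [hw'def, ip_mul, hMdet]; ring
  have hIv : ip 1 v' = 0 := by
    have := ip_mul M x v
    rw [hMx, hMdet, hxv, ← hv'def] at this
    linarith
  have hIw : ip 1 w' = 0 := by
    have := ip_mul M x w
    rw [hMx, hMdet, hxw, ← hw'def] at this
    linarith
  have hv11 : v' 1 1 = - v' 0 0 := by
    simp only [ip, Matrix.one_apply] at hIv
    norm_num at hIv
    linarith
  have hw11 : w' 1 1 = - w' 0 0 := by
    simp only [ip, Matrix.one_apply] at hIw
    norm_num at hIw
    linarith
  set a := v' 0 0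
  set b := v' 0 1
  set c := v' 1 0
  set p := w' 0 0
  set r := w' 0 1
  set s := w' 1 0
  have e1 : a*a + b*c = 0 := by
    simp only [ip, hv11] at h1; linarith
  have e2 : 2*a*p + b*s + c*r = 0 := by
    simp only [ip, hv11, hw11] at h2; linarith
  have hne : ¬(a = 0 ∧ b = 0 ∧ c = 0) := by
    rintro ⟨ha, hb, hc⟩
    apply hv0
    rw [hvx]
    have : v' = 0 := by
      ext i j
      fin_cases i <;> fin_cases j
      · show v' 0 0 = 0; exact ha
      · show v' 0 1 = 0; exact hb
      · show v' 1 0 = 0; exact hc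
      · show v' 1 1 = 0; rw [hv11, ha]; ring
    rw [this, mul_zero]
  rcases key a b c p r s e1 e2 hne with hpos | ⟨l, hp, hr, hs⟩
  · have : ip w' w' = p*p + r*s := by
      simp only [ip, hw11]; ring
    linarith
  · exfalso
    have hwv : w' = l • v' := by
      ext i j
      fin_cases i <;> fin_cases j
      · show w' 0 0 = (l • v') 0 0
        simp only [Matrix.smul_apply, smul_eq_mul]; exact hp
      · show w' 0 1 = (l • v') 0 1
        simp only [Matrix.smul_apply, smul_eq_mul]; exact hr
      · show w' 1 0 = (l • v') 1 0
        simp only [Matrix.smul_apply, smul_eq_mul]; exact hs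
      · show w' 1 1 = (l • v') 1 1
        simp only [Matrix.smul_apply, smul_eq_mul]
        rw [hw11, hv11, hp]; ring
    have hrel : l • v + (-1 : ℝ) • w = 0 := by
      rw [hvx, hwx, hwv]
      rw [Matrix.mul_smul]
      module
    have := (LinearIndependent.pair_iff.mp hind l (-1) hrel).2
    norm_num at this
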